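/- Stable periodicity of 2-torus braid complexes (head): For every m ≥ 0 and every t ≥ −m there are isomorphisms of truncated complexes τ^{≥ −m} M⟦σ_1^m⟧_Enh ≅ τ^{≥ −m}(M⟦σ_1^{m+2}⟧_Enh {2}), i.e. for all t ≥ −m there exist isomorphisms ψ_t between the degree-t chain spaces of M⟦σ_1^m⟧_Enh and of M⟦σ_1^{m+2}⟧_Enh{2} commuting with the differentials. -/

import Mathlib

/-!
STATEMENT 12: Stable periodicity of 2-torus braid complexes (head):
`τ^{≥ -m} M⟦σ₁^m⟧_Enh ≅ τ^{≥ -m} (M⟦σ₁^{m+2}⟧_Enh {2})`.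

The Morse complexes are presented combinatorially: the chain space of `M⟦σ₁^m⟧_Enh` in
homological degree `t = a - m` is the cell of the unique critical enhanced word
`critW m a`, and the differential is the signed sum over directed paths of the graph
`G(⟦σ₁^m⟧_Enh, M)` (discrete Morse theory). The cells and matrix elements of the delooped
Khovanov complexes are abstract data `cell`, `dv`, `gv` over an additive category,
constrained by the structural hypotheses of the Bar-Natan cube: matrix elements are
supported on the combinatorial edge relation `KEdge`, matched arrows are isomorphisms
(with inverses `gv`), and — since glueing `σ₁^{m+2}` is obtained from `σ₁^m` by stacking a
full twist, i.e. prepending two `1`-smoothed crossings — cells and matrix elements are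
invariant under prepending `11` to enhanced words. Conclusion: for every homological
degree `t ≥ -m` (i.e. every `a = m + t ∈ {0, …, m}`) there are isomorphisms `ψ` of the
Morse chain spaces commuting with the Morse differentials; the internal grading shifts
differ by exactly `2` (the `{2}`).
-/

namespace Stmt12

/-- The symbols: `zx = 0^x`, `z1 = 0^1`, `zm = 0^-`, `om = 1^-`. -/
inductive Sym : Type
  | zx | z1 | zm | om
  deriving DecidableEq

open Sym

/-- Words are functions `ℕ → Sym`; a word of length `m` is padded with `om` beyond `m`. -/
abbrev Word : Type := ℕ → Sym

/-- A symbol is a zero-smoothing. -/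
def isZ (s : Sym) : Prop := s ≠ om

/-- An enhanced word of the 2-strand braid `σ₁^m`: padded by `om` beyond `m`, and a `0`
carries superscript `x` or `1` iff it is not the last zero (the last zero carries `-`,
ones carry `-`). -/
def Valid (m : ℕ) (w : Word) : Prop :=
  (∀ i, m ≤ i → w i = om) ∧
  ∀ i < m, ((w i = zx ∨ w i = z1) ↔ (isZ (w i) ∧ ∃ j, i < j ∧ j < m ∧ isZ (w j)))

/-- The nonzero matrix elements of the delooped Khovanov cube of `σ₁^m` between enhanced
words: `b` is obtained from `a` by changing one `0` (at index `q`) into a `1`; depending on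
the position of `q` among the zeros of `a`, the corresponding dotted cobordism is nonzero
precisely in the following cases (merges of labelled circles following the Frobenius rules
`x·x = 0`, `x·1 = x`, `1·1 = 1`, merges of a labelled circle into the through-strands being
the identity or a dotted identity). -/
def KEdge (m : ℕ) (a b : Word) : Prop :=
  Valid m a ∧ Valid m b ∧ ∃ q, q < m ∧ isZ (a q) ∧ b q = om ∧
    ( -- `q` is the first zero (possibly the only one): a circle (if any) is merged into
      -- the through-strands; all other labels are unchanged
      ((∀ i, i < q → a i = om) ∧ (∀ i, i ≠ q → b i = a i)) ∨
      -- `q` is the last zero, with a previous zero at `p`: the circle `(p, q)` is merged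
      -- into the through-strands and `p` becomes the (unlabelled) last zero
      (∃ p, p < q ∧ isZ (a p) ∧ (∀ i, p < i → i < q → a i = om) ∧
        (∀ i, q < i → a i = om) ∧ b p = zm ∧
        (∀ i, i ≠ p → i ≠ q → b i = a i)) ∨
      -- `q` is a middle zero, with previous zero `p` and a later zero: the circles
      -- `(p, q)` and `(q, next)` merge, with labels multiplied (`x·x` gives the zero
      -- morphism, hence no edge)
      (∃ p, p < q ∧ isZ (a p) ∧ (∀ i, p < i → i < q → a i = om) ∧
        (∃ j, q < j ∧ j < m ∧ isZ (a j)) ∧ ¬(a p = zx ∧ a q = zx) ∧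
        ((a p = z1 ∧ a q = z1 ∧ b p = z1) ∨ (¬(a p = z1 ∧ a q = z1) ∧ b p = zx)) ∧
        (∀ i, i ≠ p → i ≠ q → b i = a i)))

/-- The matching pattern at position `p`:
`z = 1…1 0^x…0^x 0^1 0^s y…` is matched with `x = 1…1 0^x…0^x 0^s 1 y…`. -/
def Mpat (m : ℕ) (z x : Word) (p : ℕ) : Prop :=
  p + 1 < m ∧
  (∃ t, t ≤ p ∧ (∀ i, i < t → z i = om) ∧ (∀ i, t ≤ i → i < p → z i = zx)) ∧
  z p = z1 ∧ isZ (z (p + 1)) ∧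
  x p = z (p + 1) ∧ x (p + 1) = om ∧ (∀ i, i ≠ p → i ≠ p + 1 → x i = z i)

/-- The Morse matching `M` on the enhanced words of `σ₁^m`. -/
def MM (m : ℕ) (z x : Word) : Prop :=
  Valid m z ∧ Valid m x ∧ ∃ p, Mpat m z x p

/-- The edge relation of the graph `G(⟦σ₁^m⟧_Enh, M)`: nonzero matrix elements, with the
arrows of `M` reversed. -/
def GE (m : ℕ) (a b : Word) : Prop := (KEdge m a b ∧ ¬ MM m a b) ∨ MM m b a

/-- A directed cycle. -/
def HasCycle {V : Type*} (E : V → V → Prop) : Prop :=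
  ∃ (n : ℕ) (f : ℕ → V), 0 < n ∧ f n = f 0 ∧ ∀ t < n, E (f t) (f (t + 1))


/-- The critical cell with `a` leading ones. -/
def critW (m a : ℕ) : Word := fun i =>
  if i < a then om else if i + 1 < m then zx else if i + 1 = m then zm else om

/-- The internal grading shift of the (delooped) cell of an enhanced word. -/
def qsh (m : ℕ) (w : Word) : ℤ :=
  (((Finset.range m).filter fun i => w i = om).card : ℤ) - 2 * m
    + (((Finset.range m).filter fun i => w i = z1).card : ℤ)
    - (((Finset.range m).filter fun i => w i = zx).card : ℤ)

/-- Directed paths in `G(⟦σ₁^m⟧_Enh, M)`, with up-steps (unmatched nonzero matrix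
elements) and down-steps (reversed matched arrows) recorded. -/
inductive GPath (m : ℕ) : Word → Word → Type
  | nil (a : Word) : GPath m a a
  | up {a b c : Word} (e : KEdge m a b) (hne : ¬ MM m a b) (p : GPath m b c) : GPath m a c
  | down {a b c : Word} (e : MM m b a) (p : GPath m b c) : GPath m a c

/-- The number of reversed (matched) edges in a path. -/
def downs {m : ℕ} : ∀ {a b : Word}, GPath m a b → ℕ
  | _, _, .nil _ => 0
  | _, _, .up _ _ p => downs p
  | _, _, .down _ p => downs p + 1

section Cat

open CategoryTheory

universe v u

variable {𝒞 : Type u} [Category.{v} 𝒞] [Preadditive 𝒞]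

/-- The value of the remembering functor on a path, given the values `dv` of the matrix
elements on cells and the inverses `gv` of the matched arrows. -/
def pathHom (cell : Word → 𝒞) (dv : ∀ a b : Word, (cell a ⟶ cell b))
    (gv : ∀ a b : Word, (cell b ⟶ cell a)) (m : ℕ) :
    ∀ {a b : Word}, GPath m a b → (cell a ⟶ cell b)
  | _, _, .nil a => 𝟙 (cell a)
  | _, _, .up (a := a) (b := b) _ _ p => dv a b ≫ pathHom cell dv gv m p
  | _, _, .down (a := a) (b := b) _ p => gv b a ≫ pathHom cell dv gv m p

/-- A matrix element of the Morse differential: the signed sum over all directed paths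
between two (critical) cells. -/
noncomputable def mEntry (cell : Word → 𝒞) (dv : ∀ a b : Word, (cell a ⟶ cell b))
    (gv : ∀ a b : Word, (cell b ⟶ cell a)) (m : ℕ) (z x : Word) : (cell z ⟶ cell x) :=
  ∑ᶠ p : GPath m z x, ((-1 : ℤ) ^ downs p) • pathHom cell dv gv m p

end Cat


/-- Prepending two `1`-smoothed crossings (a full twist) to an enhanced word. -/
def prep2 (w : Word) : Word := fun i => if i < 2 then om else w (i - 2)

section Aux

lemma prep2_lt2 (w : Word) {i : ℕ} (h : i < 2) : prep2 w i = om := by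
  simp [prep2, h]

lemma prep2_ge2 (w : Word) {i : ℕ} (h : 2 ≤ i) : prep2 w i = w (i - 2) := by
  show (if i < 2 then om else w (i - 2)) = w (i - 2)
  rw [if_neg (by omega)]

lemma prep2_add2 (w : Word) (j : ℕ) : prep2 w (j + 2) = w j := rfl

/-- Shift a word down by two. -/
def unp (w : Word) : Word := fun j => w (j + 2)

lemma prep2_unp {w : Word} (h0 : w 0 = om) (h1 : w 1 = om) : prep2 (unp w) = w := by
  funext i
  rcases Nat.lt_or_ge i 2 with h | h
  · interval_cases i
    · rw [prep2_lt2 _ (by omega), h0]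
    · rw [prep2_lt2 _ (by omega), h1]
  · rw [prep2_ge2 _ h]
    show w (i - 2 + 2) = w i
    congr 1
    omega

lemma isZ_prep2 {w : Word} {i : ℕ} (h : isZ (prep2 w i)) : 2 ≤ i := by
  by_contra hc
  exact h (prep2_lt2 w (by omega))

lemma valid_prep2 {m : ℕ} {w : Word} : Valid (m + 2) (prep2 w) ↔ Valid m w := by
  constructor
  · rintro ⟨h1, h2⟩
    refine ⟨fun i hi => ?_, fun i hi => ?_⟩
    · have := h1 (i + 2) (by omega); rwa [prep2_add2] at this
    · have := h2 (i + 2) (by omega)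
      rw [prep2_add2] at this
      constructor
      · intro h
        obtain ⟨hz, j, hj1, hj2, hj3⟩ := this.mp h
        have hj : 2 ≤ j := by omega
        refine ⟨hz, j - 2, by omega, by omega, ?_⟩
        rwa [show j = (j - 2) + 2 by omega, prep2_add2] at hj3
      · rintro ⟨hz, j, hj1, hj2, hj3⟩
        exact this.mpr ⟨hz, j + 2, by omega, by omega, by rwa [prep2_add2]⟩
  · rintro ⟨h1, h2⟩
    refine ⟨fun i hi => ?_, fun i hi => ?_⟩
    · rcases Nat.lt_or_ge i 2 with h | h
      · exact prep2_lt2 _ h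
      · rw [prep2_ge2 _ h]; exact h1 _ (by omega)
    · rcases Nat.lt_or_ge i 2 with h | h
      · rw [prep2_lt2 _ h]
        constructor
        · rintro (hh | hh) <;> exact Sym.noConfusion hh
        · rintro ⟨hz, _⟩; exact absurd rfl hz
      · rw [prep2_ge2 _ h]
        have := h2 (i - 2) (by omega)
        constructor
        · intro hh
          obtain ⟨hz, j, hj1, hj2, hj3⟩ := this.mp hh
          exact ⟨hz, j + 2, by omega, by omega, by rwa [prep2_add2]⟩
        · rintro ⟨hz, j, hj1, hj2, hj3⟩
          have hj : 2 ≤ j := by omega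
          refine this.mpr ⟨hz, j - 2, by omega, by omega, ?_⟩
          rwa [show j = (j - 2) + 2 by omega, prep2_add2] at hj3

lemma KEdge_prep2 {m : ℕ} {a b : Word} :
    KEdge (m + 2) (prep2 a) (prep2 b) ↔ KEdge m a b := by
  constructor
  · rintro ⟨hva, hvb, q, hq, hz, hbq, hcase⟩
    have hq2 : 2 ≤ q := isZ_prep2 hz
    rw [show q = (q - 2) + 2 by omega] at hz hbq hcase
    refine ⟨valid_prep2.mp hva, valid_prep2.mp hvb, q - 2, by omega, hz, hbq, ?_⟩
    rcases hcase with ⟨h1, h2⟩ | ⟨p, hp, hpz, hmid, haft, hbp, hoth⟩ |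
      ⟨p, hp, hpz, hmid, hex, hxx, hlab, hoth⟩
    · left
      refine ⟨fun i hi => ?_, fun i hi => ?_⟩
      · have := h1 (i + 2) (by omega); rwa [prep2_add2] at this
      · have := h2 (i + 2) (by omega); rwa [prep2_add2, prep2_add2] at this
    · right; left
      have hp2 : 2 ≤ p := isZ_prep2 hpz
      rw [show p = (p - 2) + 2 by omega] at hpz hbp hoth
      refine ⟨p - 2, by omega, hpz, fun i h1 h2 => ?_, fun i h1 => ?_, hbp,
        fun i h1 h2 => ?_⟩
      · have := hmid (i + 2) (by omega) (by omega); rwa [prep2_add2] at this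
      · have := haft (i + 2) (by omega); rwa [prep2_add2] at this
      · have := hoth (i + 2) (by omega) (by omega); rwa [prep2_add2, prep2_add2] at this
    · right; right
      have hp2 : 2 ≤ p := isZ_prep2 hpz
      obtain ⟨j, hj1, hj2, hj3⟩ := hex
      have hj : 2 ≤ j := by omega
      rw [show j = (j - 2) + 2 by omega] at hj3
      rw [show p = (p - 2) + 2 by omega] at hpz hxx hlab hoth
      refine ⟨p - 2, by omega, hpz, fun i h1 h2 => ?_,
        ⟨j - 2, by omega, by omega, hj3⟩, hxx, hlab, fun i h1 h2 => ?_⟩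
      · have := hmid (i + 2) (by omega) (by omega); rwa [prep2_add2] at this
      · have := hoth (i + 2) (by omega) (by omega); rwa [prep2_add2, prep2_add2] at this
  · rintro ⟨hva, hvb, q, hq, hz, hbq, hcase⟩
    refine ⟨valid_prep2.mpr hva, valid_prep2.mpr hvb, q + 2, by omega,
      by rwa [prep2_add2], by rwa [prep2_add2], ?_⟩
    rcases hcase with ⟨h1, h2⟩ | ⟨p, hp, hpz, hmid, haft, hbp, hoth⟩ |
      ⟨p, hp, hpz, hmid, hex, hxx, hlab, hoth⟩
    · left
      refine ⟨fun i hi => ?_, fun i hi => ?_⟩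
      · rcases Nat.lt_or_ge i 2 with h | h
        · exact prep2_lt2 _ h
        · rw [prep2_ge2 _ h]; exact h1 _ (by omega)
      · rcases Nat.lt_or_ge i 2 with h | h
        · rw [prep2_lt2 _ h, prep2_lt2 _ h]
        · rw [prep2_ge2 _ h, prep2_ge2 _ h]; exact h2 _ (by omega)
    · right; left
      refine ⟨p + 2, by omega, by rwa [prep2_add2], fun i h1 h2 => ?_,
        fun i h1 => ?_, by rwa [prep2_add2], fun i h1 h2 => ?_⟩
      · rw [prep2_ge2 _ (by omega)]; exact hmid _ (by omega) (by omega)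
      · rw [prep2_ge2 _ (by omega)]; exact haft _ (by omega)
      · rcases Nat.lt_or_ge i 2 with h | h
        · rw [prep2_lt2 _ h, prep2_lt2 _ h]
        · rw [prep2_ge2 _ h, prep2_ge2 _ h]; exact hoth _ (by omega) (by omega)
    · right; right
      obtain ⟨j, hj1, hj2, hj3⟩ := hex
      refine ⟨p + 2, by omega, by rwa [prep2_add2], fun i h1 h2 => ?_,
        ⟨j + 2, by omega, by omega, by rwa [prep2_add2]⟩,
        by rwa [prep2_add2, prep2_add2], by rwa [prep2_add2, prep2_add2],
        fun i h1 h2 => ?_⟩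
      · rw [prep2_ge2 _ (by omega)]; exact hmid _ (by omega) (by omega)
      · rcases Nat.lt_or_ge i 2 with h | h
        · rw [prep2_lt2 _ h, prep2_lt2 _ h]
        · rw [prep2_ge2 _ h, prep2_ge2 _ h]; exact hoth _ (by omega) (by omega)

lemma Mpat_prep2_add {m : ℕ} {z x : Word} {p : ℕ} (h : Mpat m z x p) :
    Mpat (m + 2) (prep2 z) (prep2 x) (p + 2) := by
  obtain ⟨hpm, ⟨t, ht, h1, h2⟩, hz1, hz2, hx1, hx2, hoth⟩ := h
  refine ⟨by omega, ⟨t + 2, by omega, fun i hi => ?_, fun i hi1 hi2 => ?_⟩,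
    by rwa [prep2_add2], ?_, ?_, ?_, fun i hi1 hi2 => ?_⟩
  · rcases Nat.lt_or_ge i 2 with h | h
    · exact prep2_lt2 _ h
    · rw [prep2_ge2 _ h]; exact h1 _ (by omega)
  · rw [prep2_ge2 _ (by omega)]; exact h2 _ (by omega) (by omega)
  · show isZ (prep2 z ((p + 1) + 2)); rwa [prep2_add2]
  · show prep2 x (p + 2) = prep2 z ((p + 1) + 2); rw [prep2_add2, prep2_add2]; exact hx1
  · show prep2 x ((p + 1) + 2) = om; rwa [prep2_add2]
  · rcases Nat.lt_or_ge i 2 with h | h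
    · rw [prep2_lt2 _ h, prep2_lt2 _ h]
    · rw [prep2_ge2 _ h, prep2_ge2 _ h]; exact hoth _ (by omega) (by omega)

lemma Mpat_prep2_rev {m : ℕ} {z x : Word} {P : ℕ}
    (h : Mpat (m + 2) (prep2 z) (prep2 x) P) : Mpat m z x (P - 2) := by
  obtain ⟨hpm, ⟨t, ht, h1, h2⟩, hz1, hz2, hx1, hx2, hoth⟩ := h
  have hP : 2 ≤ P := by
    by_contra hc
    rw [prep2_lt2 _ (by omega)] at hz1; exact Sym.noConfusion hz1
  have ht2 : 2 ≤ t := by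
    by_contra hc
    have h3 := h2 t (le_refl t) (by omega)
    rw [prep2_lt2 _ (by omega)] at h3; exact Sym.noConfusion h3
  obtain ⟨p, rfl⟩ : ∃ p, P = p + 2 := ⟨P - 2, by omega⟩
  refine ⟨by omega, ⟨t - 2, by omega, fun i hi => ?_, fun i hi1 hi2 => ?_⟩,
    hz1, hz2, hx1, hx2, fun i hi1 hi2 => ?_⟩
  · have := h1 (i + 2) (by omega); rwa [prep2_add2] at this
  · have := h2 (i + 2) (by omega) (by omega); rwa [prep2_add2] at this
  · have := hoth (i + 2) (by omega) (by omega); rwa [prep2_add2, prep2_add2] at this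

lemma MM_prep2 {m : ℕ} {z x : Word} : MM (m + 2) (prep2 z) (prep2 x) ↔ MM m z x := by
  constructor
  · rintro ⟨hvz, hvx, P, hP⟩
    exact ⟨valid_prep2.mp hvz, valid_prep2.mp hvx, P - 2, Mpat_prep2_rev hP⟩
  · rintro ⟨hvz, hvx, p, hp⟩
    exact ⟨valid_prep2.mpr hvz, valid_prep2.mpr hvx, p + 2, Mpat_prep2_add hp⟩

lemma MM_KEdge {m : ℕ} {z x : Word} (h : MM m z x) : KEdge m z x := by
  obtain ⟨hvz, hvx, p, hpm, ⟨t, ht, htom, htzx⟩, hz1, hzp1, hxp, hxp1, hoth⟩ := h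
  refine ⟨hvz, hvx, p + 1, hpm, hzp1, hxp1, ?_⟩
  by_cases hlater : ∃ j, p + 1 < j ∧ j < m ∧ isZ (z j)
  · right; right
    refine ⟨p, by omega, by rw [hz1]; exact fun hc => Sym.noConfusion hc,
      fun i h1 h2 => by omega, hlater, by rw [hz1]; rintro ⟨hc, -⟩; exact Sym.noConfusion hc,
      ?_, fun i h1 h2 => hoth i h1 h2⟩
    have hv2 := hvz.2 (p + 1) hpm
    have : z (p + 1) = zx ∨ z (p + 1) = z1 := hv2.mpr ⟨hzp1, hlater⟩
    rcases this with hh | hh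
    · right
      exact ⟨by rw [hz1, hh]; rintro ⟨-, hc⟩; exact Sym.noConfusion hc, by rw [hxp, hh]⟩
    · left; exact ⟨hz1, hh, by rw [hxp, hh]⟩
  · right; left
    refine ⟨p, by omega, by rw [hz1]; exact fun hc => Sym.noConfusion hc,
      fun i h1 h2 => by omega, fun i hi => ?_, ?_, fun i h1 h2 => hoth i h1 h2⟩
    · by_cases him : i < m
      · by_contra hne
        exact hlater ⟨i, hi, him, hne⟩
      · exact hvz.1 i (by omega)
    · have hv2 := hvz.2 (p + 1) hpm
      have hnot : ¬(z (p + 1) = zx ∨ z (p + 1) = z1) := fun hh => hlater (hv2.mp hh).2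
      have hzm : z (p + 1) = zm := by
        rcases hc : z (p + 1) with _ | _ | _ | _
        · exact absurd (Or.inl hc) hnot
        · exact absurd (Or.inr hc) hnot
        · rfl
        · exact absurd hc hzp1
      rw [hxp, hzm]

lemma KEdge_om01 {m : ℕ} {a b : Word} (h : KEdge m a b) (h0 : a 0 = om) (h1 : a 1 = om) :
    b 0 = om ∧ b 1 = om := by
  obtain ⟨-, -, q, hq, hz, hbq, hcase⟩ := h
  have hq0 : (0 : ℕ) ≠ q := by rintro rfl; exact hz h0
  have hq1 : (1 : ℕ) ≠ q := by rintro rfl; exact hz h1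
  rcases hcase with ⟨-, h2⟩ | ⟨p, -, hpz, -, -, -, hoth⟩ | ⟨p, -, hpz, -, -, -, -, hoth⟩
  · exact ⟨(h2 0 hq0).trans h0, (h2 1 hq1).trans h1⟩
  · have hp0 : (0 : ℕ) ≠ p := by rintro rfl; exact hpz h0
    have hp1 : (1 : ℕ) ≠ p := by rintro rfl; exact hpz h1
    exact ⟨(hoth 0 hp0 hq0).trans h0, (hoth 1 hp1 hq1).trans h1⟩
  · have hp0 : (0 : ℕ) ≠ p := by rintro rfl; exact hpz h0
    have hp1 : (1 : ℕ) ≠ p := by rintro rfl; exact hpz h1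
    exact ⟨(hoth 0 hp0 hq0).trans h0, (hoth 1 hp1 hq1).trans h1⟩

lemma MM_om01 {m : ℕ} {z x : Word} (h : MM m z x) (h0 : x 0 = om) (h1 : x 1 = om) :
    z 0 = om ∧ z 1 = om := by
  obtain ⟨-, -, p, hpm, -, hz1, hz2, hx1, hx2, hoth⟩ := h
  have hp0 : p ≠ 0 := by rintro rfl; rw [h0] at hx1; exact hz2 hx1.symm
  have hp1 : p ≠ 1 := by rintro rfl; rw [h1] at hx1; exact hz2 hx1.symm
  exact ⟨(hoth 0 (Ne.symm hp0) (by omega)).symm.trans h0,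
    (hoth 1 (Ne.symm hp1) (by omega)).symm.trans h1⟩


/-- Number of zero-smoothings among the first `m` symbols. -/
def Zc (m : ℕ) (w : Word) : ℕ := ((Finset.range m).filter fun i => w i ≠ om).card

lemma KEdge_Zc {m : ℕ} {a b : Word} (h : KEdge m a b) : Zc m b < Zc m a := by
  obtain ⟨-, -, q, hq, hz, hbq, hcase⟩ := h
  have hsub : (Finset.range m).filter (fun i => b i ≠ om)
      ⊆ (Finset.range m).filter (fun i => a i ≠ om) := by
    intro i hi
    rw [Finset.mem_filter] at hi ⊢
    refine ⟨hi.1, ?_⟩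
    have hiq : i ≠ q := by rintro rfl; exact hi.2 hbq
    rcases hcase with ⟨-, h2⟩ | ⟨p, -, hpz, -, -, -, hoth⟩ | ⟨p, -, hpz, -, -, -, -, hoth⟩
    · rw [← h2 i hiq]; exact hi.2
    · by_cases hip : i = p
      · subst hip; exact hpz
      · rw [← hoth i hip hiq]; exact hi.2
    · by_cases hip : i = p
      · subst hip; exact hpz
      · rw [← hoth i hip hiq]; exact hi.2
  exact Finset.card_lt_card ((Finset.ssubset_iff_of_subset hsub).mpr
    ⟨q, Finset.mem_filter.mpr ⟨Finset.mem_range.mpr hq, hz⟩,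
      fun hc => (Finset.mem_filter.mp hc).2 hbq⟩)

lemma MM_Zc {m : ℕ} {z x : Word} (h : MM m z x) : Zc m x < Zc m z := by
  obtain ⟨-, -, p, hpm, -, hz1, hz2, hx1, hx2, hoth⟩ := h
  have hsub : (Finset.range m).filter (fun i => x i ≠ om)
      ⊆ (Finset.range m).filter (fun i => z i ≠ om) := by
    intro i hi
    rw [Finset.mem_filter] at hi ⊢
    refine ⟨hi.1, ?_⟩
    by_cases hip : i = p
    · subst hip; rw [hz1]; exact fun hc => Sym.noConfusion hc
    · by_cases hip1 : i = p + 1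
      · subst hip1; exact absurd hx2 hi.2
      · rw [← hoth i hip hip1]; exact hi.2
  exact Finset.card_lt_card ((Finset.ssubset_iff_of_subset hsub).mpr
    ⟨p + 1, Finset.mem_filter.mpr ⟨Finset.mem_range.mpr hpm, hz2⟩,
      fun hc => (Finset.mem_filter.mp hc).2 hx2⟩)

/-- The list of words visited by a path (after the start). -/
def trace {m : ℕ} : ∀ {a b : Word}, GPath m a b → List Word
  | _, _, .nil _ => []
  | _, _, .up (b := b) _ _ p => b :: trace p
  | _, _, .down (b := b) _ p => b :: trace p

lemma trace_inj {m : ℕ} : ∀ {a c : Word} (p q : GPath m a c), trace p = trace q → p = q := by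
  intro a c p
  induction p with
  | nil a =>
    intro q h
    cases q with
    | nil => rfl
    | up e hne p => exact absurd h (by simp [trace])
    | down e p => exact absurd h (by simp [trace])
  | up e hne p ih =>
    intro q h
    cases q with
    | nil => exact absurd h (by simp [trace])
    | up e2 hne2 p2 =>
      simp only [trace, List.cons.injEq] at h
      obtain ⟨hb, ht⟩ := h
      subst hb
      rw [ih p2 ht]
    | down e2 p2 =>
      simp only [trace, List.cons.injEq] at h
      obtain ⟨hb, ht⟩ := h
      subst hb
      exact absurd (KEdge_Zc e) (by have := MM_Zc e2; omega)
  | down e p ih =>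
    intro q h
    cases q with
    | nil => exact absurd h (by simp [trace])
    | up e2 hne2 p2 =>
      simp only [trace, List.cons.injEq] at h
      obtain ⟨hb, ht⟩ := h
      subst hb
      exact absurd (KEdge_Zc e2) (by have := MM_Zc e; omega)
    | down e2 p2 =>
      simp only [trace, List.cons.injEq] at h
      obtain ⟨hb, ht⟩ := h
      subst hb
      rw [ih p2 ht]

/-- Lift a path along `prep2`. -/
def liftP {m : ℕ} : ∀ {a b : Word}, GPath m a b → GPath (m + 2) (prep2 a) (prep2 b)
  | _, _, .nil a => .nil (prep2 a)
  | _, _, .up e hne p => .up (KEdge_prep2.mpr e) (fun hc => hne (MM_prep2.mp hc)) (liftP p)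
  | _, _, .down e p => .down (MM_prep2.mpr e) (liftP p)

/-- Push a path starting at a word with two leading `1`s down along `prep2`. -/
def unliftP {m : ℕ} : ∀ {w c : Word}, GPath (m + 2) w c → w 0 = om → w 1 = om →
    GPath m (unp w) (unp c)
  | _, _, .nil w, _, _ => .nil (unp w)
  | _, _, .up (b := b) e hne p, h0, h1 =>
      .up (KEdge_prep2.mp (by
          rwa [prep2_unp h0 h1,
            prep2_unp (KEdge_om01 e h0 h1).1 (KEdge_om01 e h0 h1).2]))
        (fun hc => hne (by
          rw [← prep2_unp h0 h1,
            ← prep2_unp (KEdge_om01 e h0 h1).1 (KEdge_om01 e h0 h1).2]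
          exact MM_prep2.mpr hc))
        (unliftP p (KEdge_om01 e h0 h1).1 (KEdge_om01 e h0 h1).2)
  | _, _, .down (b := b) e p, h0, h1 =>
      .down (MM_prep2.mp (by
          rwa [prep2_unp (MM_om01 e h0 h1).1 (MM_om01 e h0 h1).2, prep2_unp h0 h1]))
        (unliftP p (MM_om01 e h0 h1).1 (MM_om01 e h0 h1).2)

lemma trace_liftP {m : ℕ} {a b : Word} (p : GPath m a b) :
    trace (liftP p) = (trace p).map prep2 := by
  induction p with
  | nil a => rfl
  | up e hne p ih => simp only [liftP, trace, List.map_cons, ih]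
  | down e p ih => simp only [liftP, trace, List.map_cons, ih]

lemma trace_unliftP {m : ℕ} : ∀ {w c : Word} (q : GPath (m + 2) w c)
    (h0 : w 0 = om) (h1 : w 1 = om), trace (unliftP q h0 h1) = (trace q).map unp := by
  intro w c q
  induction q with
  | nil a => intro h0 h1; rfl
  | up e hne p ih => intro h0 h1; simp only [unliftP, trace, List.map_cons, ih]
  | down e p ih => intro h0 h1; simp only [unliftP, trace, List.map_cons, ih]

lemma trace_om01 {m : ℕ} : ∀ {w c : Word} (q : GPath (m + 2) w c),
    w 0 = om → w 1 = om → ∀ v ∈ trace q, v 0 = om ∧ v 1 = om := by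
  intro w c q
  induction q with
  | nil a => intro h0 h1 v hv; exact absurd hv (by simp [trace])
  | up e hne p ih =>
    intro h0 h1 v hv
    rcases List.mem_cons.mp hv with rfl | hv
    · exact KEdge_om01 e h0 h1
    · exact ih (KEdge_om01 e h0 h1).1 (KEdge_om01 e h0 h1).2 v hv
  | down e p ih =>
    intro h0 h1 v hv
    rcases List.mem_cons.mp hv with rfl | hv
    · exact MM_om01 e h0 h1
    · exact ih (MM_om01 e h0 h1).1 (MM_om01 e h0 h1).2 v hv

lemma unliftP_liftP {m : ℕ} {a b : Word} (p : GPath m a b) :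
    unliftP (liftP p) rfl rfl = p := by
  apply trace_inj
  refine (trace_unliftP (liftP p) rfl rfl).trans ?_
  rw [trace_liftP, List.map_map]
  exact List.map_id (trace p)

lemma liftP_unliftP {m : ℕ} {a b : Word} (q : GPath (m + 2) (prep2 a) (prep2 b)) :
    liftP (unliftP q rfl rfl) = q := by
  apply trace_inj
  rw [trace_liftP]
  refine (congrArg (List.map prep2) (trace_unliftP q rfl rfl)).trans ?_
  rw [List.map_map]
  have h := trace_om01 q rfl rfl
  calc (trace q).map (prep2 ∘ unp) = (trace q).map id := by
        apply List.map_congr_left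
        intro v hv
        exact prep2_unp (h v hv).1 (h v hv).2
    _ = trace q := List.map_id _

lemma downs_liftP {m : ℕ} {a b : Word} (p : GPath m a b) : downs (liftP p) = downs p := by
  induction p with
  | nil a => rfl
  | up e hne p ih => simp only [liftP, downs, ih]
  | down e p ih => simp only [liftP, downs, ih]


lemma count_prep2 (m : ℕ) (w : Word) (s : Sym) (hs : s ≠ om) :
    ((Finset.range (m + 2)).filter fun i => prep2 w i = s).card
      = ((Finset.range m).filter fun i => w i = s).card := by
  have himg : (Finset.range (m + 2)).filter (fun i => prep2 w i = s)
      = ((Finset.range m).filter fun i => w i = s).image (· + 2) := by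
    ext i
    simp only [Finset.mem_filter, Finset.mem_range, Finset.mem_image]
    constructor
    · rintro ⟨hm, hv⟩
      have h2 : 2 ≤ i := by
        by_contra hc
        rw [prep2_lt2 _ (by omega)] at hv
        exact hs hv.symm
      refine ⟨i - 2, ⟨by omega, ?_⟩, by omega⟩
      rwa [prep2_ge2 _ h2] at hv
    · rintro ⟨j, ⟨hj, hv⟩, rfl⟩
      exact ⟨by omega, by rwa [prep2_add2]⟩
  rw [himg, Finset.card_image_of_injective _ (fun u v huv => by omega)]

lemma count_prep2_om (m : ℕ) (w : Word) :
    ((Finset.range (m + 2)).filter fun i => prep2 w i = om).card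
      = ((Finset.range m).filter fun i => w i = om).card + 2 := by
  have himg : (Finset.range (m + 2)).filter (fun i => prep2 w i = om)
      = insert 0 (insert 1 (((Finset.range m).filter fun i => w i = om).image (· + 2))) := by
    ext i
    simp only [Finset.mem_filter, Finset.mem_range, Finset.mem_insert, Finset.mem_image]
    constructor
    · rintro ⟨hm, hv⟩
      rcases Nat.lt_or_ge i 2 with h2 | h2
      · interval_cases i
        · exact Or.inl rfl
        · exact Or.inr (Or.inl rfl)
      · refine Or.inr (Or.inr ⟨i - 2, ⟨by omega, ?_⟩, by omega⟩)
        rwa [prep2_ge2 _ h2] at hv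
    · rintro (rfl | rfl | ⟨j, ⟨hj, hv⟩, rfl⟩)
      · exact ⟨by omega, prep2_lt2 _ (by omega)⟩
      · exact ⟨by omega, prep2_lt2 _ (by omega)⟩
      · exact ⟨by omega, by rwa [prep2_add2]⟩
  rw [himg, Finset.card_insert_of_notMem (by
      simp only [Finset.mem_insert, Finset.mem_image]
      rintro (h | ⟨j, -, h⟩) <;> omega),
    Finset.card_insert_of_notMem (by
      simp only [Finset.mem_image]
      rintro ⟨j, -, h⟩; omega),
    Finset.card_image_of_injective _ (fun u v huv => by omega)]

lemma qsh_prep2 (m : ℕ) (w : Word) : qsh (m + 2) (prep2 w) = qsh m w - 2 := by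
  rw [qsh, qsh, count_prep2_om, count_prep2 m w z1 (fun h => Sym.noConfusion h),
    count_prep2 m w zx (fun h => Sym.noConfusion h)]
  push_cast
  ring

lemma critW_eq (m a : ℕ) : critW (m + 2) (a + 2) = prep2 (critW m a) := by
  funext i
  rcases Nat.lt_or_ge i 2 with h | h
  · rw [prep2_lt2 _ h]
    show (if i < a + 2 then om else _) = om
    rw [if_pos (by omega)]
  · rw [prep2_ge2 _ h]
    show (if i < a + 2 then om else if i + 1 < m + 2 then zx else if i + 1 = m + 2 then zm else om)
      = (if i - 2 < a then om else if i - 2 + 1 < m then zx else if i - 2 + 1 = m then zm else om)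
    by_cases h1 : i - 2 < a
    · rw [if_pos (by omega), if_pos h1]
    · rw [if_neg (by omega), if_neg h1]
      by_cases h2 : i - 2 + 1 < m
      · rw [if_pos (by omega), if_pos h2]
      · rw [if_neg (by omega), if_neg h2]
        by_cases h3 : i - 2 + 1 = m
        · rw [if_pos (by omega), if_pos h3]
        · rw [if_neg (by omega), if_neg h3]

end Aux

open CategoryTheory

universe v u

lemma conj_finsum {𝒞 : Type u} [Category.{v} 𝒞] [Preadditive 𝒞] {ι : Sort*} {X X' Y Y' : 𝒞}
    (e : X' = X) (e' : Y = Y') (f : ι → (X ⟶ Y)) :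
    ∑ᶠ i, eqToHom e ≫ f i ≫ eqToHom e' = eqToHom e ≫ (∑ᶠ i, f i) ≫ eqToHom e' := by
  subst e; subst e'
  simp only [eqToHom_refl, Category.comp_id, Category.id_comp]

theorem stmt12 {𝒞 : Type u} [Category.{v} 𝒞] [Preadditive 𝒞] (m : ℕ)
    (cell cell2 : Word → 𝒞)
    (dv : ∀ a b : Word, (cell a ⟶ cell b)) (dv2 : ∀ a b : Word, (cell2 a ⟶ cell2 b))
    (gv : ∀ a b : Word, (cell b ⟶ cell a)) (gv2 : ∀ a b : Word, (cell2 b ⟶ cell2 a))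
    -- matrix elements are supported on the nonzero-edge relation
    (hsupp : ∀ a b, ¬ KEdge m a b → dv a b = 0)
    (hsupp2 : ∀ a b, ¬ KEdge (m + 2) a b → dv2 a b = 0)
    -- matched arrows are isomorphisms, with inverses `gv`, `gv2`
    (hg : ∀ z x, MM m z x → dv z x ≫ gv z x = 𝟙 (cell z) ∧ gv z x ≫ dv z x = 𝟙 (cell x))
    (hg2 : ∀ z x, MM (m + 2) z x →
      dv2 z x ≫ gv2 z x = 𝟙 (cell2 z) ∧ gv2 z x ≫ dv2 z x = 𝟙 (cell2 x))
    -- cells and matrix elements are invariant under prepending a full twist `11`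
    (hcell : ∀ w : Word, cell2 (prep2 w) = cell w)
    (hd : ∀ a b, KEdge m a b →
      dv2 (prep2 a) (prep2 b) = eqToHom (hcell a) ≫ dv a b ≫ eqToHom (hcell b).symm) :
    -- conclusion: isomorphisms of the truncated Morse complexes
    ∃ ψ : ∀ a : ℕ, a ≤ m → (cell (critW m a) ≅ cell2 (critW (m + 2) (a + 2))),
      (∀ a (h : a + 1 ≤ m),
        mEntry cell dv gv m (critW m a) (critW m (a + 1)) ≫ (ψ (a + 1) h).hom
          = (ψ a (by omega)).hom ≫
            mEntry cell2 dv2 gv2 (m + 2) (critW (m + 2) (a + 2)) (critW (m + 2) (a + 3)))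
      ∧ ∀ a, a ≤ m → qsh (m + 2) (critW (m + 2) (a + 2)) + 2 = qsh m (critW m a) := by
  have gvc : ∀ z x : Word, MM m z x →
      gv2 (prep2 z) (prep2 x) = eqToHom (hcell x) ≫ gv z x ≫ eqToHom (hcell z).symm := by
    intro z x hmm
    have hd' := hd z x (MM_KEdge hmm)
    have h2 := hg2 (prep2 z) (prep2 x) (MM_prep2.mpr hmm)
    have h1 := hg z x hmm
    have key : (eqToHom (hcell x) ≫ gv z x ≫ eqToHom (hcell z).symm) ≫ dv2 (prep2 z) (prep2 x)
        = 𝟙 (cell2 (prep2 x)) := by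
      rw [hd']
      simp only [Category.assoc, eqToHom_trans_assoc, eqToHom_refl, Category.id_comp]
      rw [reassoc_of% h1.2]
      simp only [eqToHom_trans, eqToHom_refl]
    calc gv2 (prep2 z) (prep2 x)
        = 𝟙 _ ≫ gv2 (prep2 z) (prep2 x) := (Category.id_comp _).symm
      _ = ((eqToHom (hcell x) ≫ gv z x ≫ eqToHom (hcell z).symm)
            ≫ dv2 (prep2 z) (prep2 x)) ≫ gv2 (prep2 z) (prep2 x) := by rw [key]
      _ = (eqToHom (hcell x) ≫ gv z x ≫ eqToHom (hcell z).symm)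
            ≫ (dv2 (prep2 z) (prep2 x) ≫ gv2 (prep2 z) (prep2 x)) := by
          rw [Category.assoc]
      _ = eqToHom (hcell x) ≫ gv z x ≫ eqToHom (hcell z).symm := by
          rw [h2.1, Category.comp_id]
  have phc : ∀ (a b : Word) (p : GPath m a b),
      pathHom cell2 dv2 gv2 (m + 2) (liftP p)
        = eqToHom (hcell a) ≫ pathHom cell dv gv m p ≫ eqToHom (hcell b).symm := by
    intro a b p
    induction p with
    | nil a =>
      simp only [liftP, pathHom, Category.id_comp, eqToHom_trans, eqToHom_refl,
        Category.comp_id]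
    | up e hne p ih =>
      simp only [liftP, pathHom, ih, hd _ _ e, Category.assoc, eqToHom_trans_assoc,
        eqToHom_refl, Category.id_comp]
    | down e p ih =>
      simp only [liftP, pathHom, ih, gvc _ _ e, Category.assoc, eqToHom_trans_assoc,
        eqToHom_refl, Category.id_comp]
  have mE : ∀ z x : Word,
      mEntry cell2 dv2 gv2 (m + 2) (prep2 z) (prep2 x)
        = eqToHom (hcell z) ≫ mEntry cell dv gv m z x ≫ eqToHom (hcell x).symm := by
    intro z x
    unfold mEntry
    rw [← conj_finsum (hcell z) (hcell x).symm]
    refine (finsum_eq_of_bijective liftP ⟨?_, ?_⟩ ?_).symm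
    · intro p1 p2 hp
      rw [← unliftP_liftP p1, ← unliftP_liftP p2, hp]
    · intro q
      exact ⟨unliftP q rfl rfl, liftP_unliftP q⟩
    · intro p
      rw [downs_liftP p, phc _ _ p]
      simp only [Preadditive.comp_zsmul, Preadditive.zsmul_comp, Category.assoc]
  have mEc : ∀ (u u' v v' : Word) (h : u = u') (h' : v = v'),
      mEntry cell2 dv2 gv2 (m + 2) u v
        = eqToHom (congrArg cell2 h) ≫ mEntry cell2 dv2 gv2 (m + 2) u' v'
            ≫ eqToHom (congrArg cell2 h').symm := by
    intro u u' v v' h h'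
    subst h; subst h'
    simp only [eqToHom_refl, Category.comp_id, Category.id_comp]
  have ea : ∀ a : ℕ, cell (critW m a) = cell2 (critW (m + 2) (a + 2)) := fun a =>
    (hcell (critW m a)).symm.trans (congrArg cell2 (critW_eq m a).symm)
  refine ⟨fun a _ => eqToIso (ea a), fun a h => ?_, fun a _ => by
    rw [critW_eq, qsh_prep2]; omega⟩
  have h3 : critW (m + 2) (a + 3) = prep2 (critW m (a + 1)) := critW_eq m (a + 1)
  rw [mEc (critW (m + 2) (a + 2)) (prep2 (critW m a)) (critW (m + 2) (a + 3))
      (prep2 (critW m (a + 1))) (critW_eq m a) h3, mE]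
  simp only [eqToIso.hom, Category.assoc, eqToHom_trans_assoc, eqToHom_trans, eqToHom_refl,
    Category.id_comp, Category.comp_id]


end Stmt12
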